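/- Let B be a C*-algebra and ∂ a closed, densely defined linear operator on B (viewed as a Banach space), with domain dom(∂) ⊆ B. Let E be a Hilbert C*-module over B, 𝔈 ⊆ E a dense subspace, and ∇ : 𝔈 → E a linear map which is Hermitian in the sense that for all ξ, η ∈ 𝔈 the inner product ⟪ξ, η⟫ lies in dom(∂) and ⟪ξ, ∇η⟫ + ⟪∇ξ, η⟫ = ∂(⟪ξ, η⟫). Suppose there is a sequence (ξ_j)_{j∈ℕ} of elements of 𝔈 which is a frame for E, i.e. for every x ∈ E the partial sums ∑_{j=0}^N ξ_j·⟪ξ_j, x⟫ converge in norm to x. Then ∇ is closable: whenever ζ_n ∈ 𝔈 with ζ_n → 0 in E and ∇(ζ_n) → η in E, one has η = 0. -/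

import Mathlib

open Filter Topology
open scoped RightActions

/-- The Hilbert C⋆-module class as it stood in the older Mathlib (`CStarModule`): `E` is a
right `A`-module (action of `Aᵐᵒᵖ`) with an `A`-valued inner product satisfying
`⟪x, y <• a⟫ = ⟪x, y⟫ * a`. -/
class RightCStarModule (A E : Type*) [NonUnitalSemiring A] [StarRing A] [Module ℂ A]
    [AddCommGroup E] [Module ℂ E] [PartialOrder A] [SMul Aᵐᵒᵖ E] [Norm A] [Norm E]
    extends Inner A E where
  inner_add_right {x} {y} {z} : inner x (y + z) = inner x y + inner x z
  inner_self_nonneg {x} : 0 ≤ inner x x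
  inner_self {x} : inner x x = 0 ↔ x = 0
  inner_op_smul_right {a : A} {x y : E} : inner x (y <• a) = inner x y * a
  inner_smul_right_complex {z : ℂ} {x} {y} : inner x (z • y) = z • inner x y
  star_inner x y : star (inner x y) = inner y x
  norm_eq_sqrt_norm_inner_self x : ‖x‖ = Real.sqrt ‖inner x x‖

theorem rcs_inner_sub_right {B E : Type*} [CStarAlgebra B] [PartialOrder B]
    [NormedAddCommGroup E] [Module ℂ E] [Module Bᵐᵒᵖ E] [RightCStarModule B E] {x y z : E} :
    (inner B x (y - z) : B) = inner B x y - inner B x z := by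
  have h := RightCStarModule.inner_add_right (A := B) (x := x) (y := y - z) (z := z)
  rw [sub_add_cancel] at h
  rw [h, add_sub_cancel_right]

theorem rcs_inner_zero_right {B E : Type*} [CStarAlgebra B] [PartialOrder B]
    [NormedAddCommGroup E] [Module ℂ E] [Module Bᵐᵒᵖ E] [RightCStarModule B E] {x : E} :
    (inner B x (0 : E) : B) = 0 := by
  have h := rcs_inner_sub_right (B := B) (x := x) (y := (0 : E)) (z := (0 : E))
  rwa [sub_self, sub_self] at h

/-- The opposite-algebra view of a right Hilbert module as a `CStarModule`. -/
noncomputable def rcsToOp {B E : Type*} [CStarAlgebra B] [PartialOrder B]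
    [NormedAddCommGroup E] [Module ℂ E] [Module Bᵐᵒᵖ E] [RightCStarModule B E] :
    CStarModule Bᵐᵒᵖ E where
  inner x y := MulOpposite.op (inner B x y)
  inner_add_right := by
    intro x y z
    rw [RightCStarModule.inner_add_right, MulOpposite.op_add]
  inner_self_nonneg := by
    intro x
    exact MulOpposite.op_nonneg.mpr RightCStarModule.inner_self_nonneg
  inner_self := by
    intro x
    rw [MulOpposite.op_eq_zero_iff]
    exact RightCStarModule.inner_self
  inner_op_smul_right := by
    intro a x y
    have h := RightCStarModule.inner_op_smul_right (A := B) (a := a.unop) (x := x) (y := y)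
    simp only [MulOpposite.op_unop] at h
    rw [h, MulOpposite.op_mul, MulOpposite.op_unop]
  inner_smul_right_complex := by
    intro z x y
    rw [RightCStarModule.inner_smul_right_complex, MulOpposite.op_smul]
  star_inner := by
    intro x y
    rw [← MulOpposite.op_star, RightCStarModule.star_inner]
  norm_eq_sqrt_norm_inner_self := by
    intro x
    rw [MulOpposite.norm_op]
    exact RightCStarModule.norm_eq_sqrt_norm_inner_self x

theorem rcs_norm_inner_le {B E : Type*} [CStarAlgebra B] [PartialOrder B] [StarOrderedRing B]
    [NormedAddCommGroup E] [Module ℂ E] [Module Bᵐᵒᵖ E] [RightCStarModule B E] {x y : E} :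
    ‖(inner B x y : B)‖ ≤ ‖x‖ * ‖y‖ := by
  letI := (rcsToOp : CStarModule Bᵐᵒᵖ E)
  have h := CStarModule.norm_inner_le E (A := Bᵐᵒᵖ) (x := x) (y := y)
  exact h

/-- Let `B` be a C⋆-algebra, `∂` a closed densely defined operator on
`B`, `E` a Hilbert C⋆-module over `B`, `𝔈 ⊆ E` a dense subspace and `∇ : 𝔈 → E` a
Hermitian linear map, i.e. `⟪ξ, η⟫ ∈ dom ∂` and `⟪ξ, ∇η⟫ + ⟪∇ξ, η⟫ = ∂⟪ξ, η⟫` for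
`ξ, η ∈ 𝔈`.  If `𝔈` contains a (countable) frame `(ξⱼ)` for `E`, then `∇` is closable:
`ζₙ ∈ 𝔈`, `ζₙ → 0` and `∇ζₙ → η` imply `η = 0`. -/
theorem hermitian_connexion_closable_of_frame
    {B E : Type*} [CStarAlgebra B] [PartialOrder B] [StarOrderedRing B]
    [NormedAddCommGroup E] [Module ℂ E] [Module Bᵐᵒᵖ E] [RightCStarModule B E] [CompleteSpace E]
    (dd : B →ₗ.[ℂ] B) (hdd_dense : Dense (dd.domain : Set B)) (hdd_closed : dd.IsClosed)
    (𝔈 : Submodule ℂ E) (h𝔈 : Dense (𝔈 : Set E))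
    (Nab : 𝔈 →ₗ[ℂ] E)
    (hmem : ∀ ξ η : 𝔈, (inner B (ξ : E) (η : E) : B) ∈ dd.domain)
    (hHerm : ∀ ξ η : 𝔈,
      (inner B (ξ : E) (Nab η) : B) + (inner B (Nab ξ) (η : E) : B)
        = dd ⟨(inner B (ξ : E) (η : E) : B), hmem ξ η⟩)
    (ξseq : ℕ → E) (hξmem : ∀ j, ξseq j ∈ 𝔈)
    (hframe : ∀ x : E,
      Tendsto (fun N : ℕ => ∑ j ∈ Finset.range (N + 1),
        ξseq j <• (inner B (ξseq j) x : B)) atTop (𝓝 x)) :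
    ∀ (ζ : ℕ → 𝔈) (η : E),
      Tendsto (fun n => (ζ n : E)) atTop (𝓝 (0 : E)) →
      Tendsto (fun n => Nab (ζ n)) atTop (𝓝 η) → η = 0 := by
  intro ζ η hζ hη
  have hadj : ∀ (x : E) {f : ℕ → E} {y : E}, Tendsto f atTop (𝓝 y) →
      Tendsto (fun n => (inner B x (f n) : B)) atTop (𝓝 (inner B x y : B)) := by
    intro x f y hf
    rw [tendsto_iff_norm_sub_tendsto_zero] at hf ⊢
    refine squeeze_zero (fun n => norm_nonneg _) (fun n => ?_)
      (by simpa using hf.const_mul ‖x‖)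
    calc ‖(inner B x (f n) : B) - inner B x y‖ = ‖(inner B x (f n - y) : B)‖ := by
          rw [rcs_inner_sub_right]
      _ ≤ ‖x‖ * ‖f n - y‖ := rcs_norm_inner_le
  have key : ∀ j, (inner B (ξseq j) η : B) = 0 := by
    intro j
    set ξ : 𝔈 := ⟨ξseq j, hξmem j⟩ with hξ
    have hx : Tendsto (fun n => (inner B (ξ : E) ((ζ n : E)) : B)) atTop (𝓝 0) := by
      simpa [rcs_inner_zero_right] using hadj (ξ : E) hζ
    have hy : Tendsto (fun n => dd ⟨(inner B (ξ : E) ((ζ n : E)) : B), hmem ξ (ζ n)⟩)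
        atTop (𝓝 ((inner B (ξ : E) η : B))) := by
      have h1 : Tendsto (fun n => (inner B (ξ : E) (Nab (ζ n)) : B)) atTop
          (𝓝 (inner B (ξ : E) η : B)) := by
        exact hadj (ξ : E) hη
      have h2 : Tendsto (fun n => (inner B (Nab ξ) ((ζ n : E)) : B)) atTop (𝓝 0) := by
        simpa [rcs_inner_zero_right] using hadj (Nab ξ) hζ
      have := h1.add h2
      rw [add_zero] at this
      exact this.congr (fun n => hHerm ξ (ζ n))
    have hmemgraph : ((0 : B), (inner B (ξ : E) η : B)) ∈ dd.graph := by
      have : Tendsto (fun n => ((inner B (ξ : E) ((ζ n : E)) : B),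
          dd ⟨(inner B (ξ : E) ((ζ n : E)) : B), hmem ξ (ζ n)⟩)) atTop
          (𝓝 ((0 : B), (inner B (ξ : E) η : B))) := hx.prodMk_nhds hy
      exact hdd_closed.mem_of_tendsto this
        (Eventually.of_forall fun n => dd.mem_graph ⟨_, hmem ξ (ζ n)⟩)
    rw [LinearPMap.mem_graph_iff] at hmemgraph
    obtain ⟨y, hy1, hy2⟩ := hmemgraph
    have hy0 : y = 0 := Subtype.ext (by simpa using hy1)
    rw [hy0] at hy2
    simpa using hy2.symm
  have h0 : Tendsto (fun N : ℕ => ∑ j ∈ Finset.range (N + 1),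
      ξseq j <• (inner B (ξseq j) η : B)) atTop (𝓝 (0 : E)) := by
    have : (fun N : ℕ => ∑ j ∈ Finset.range (N + 1),
        ξseq j <• (inner B (ξseq j) η : B)) = fun _ => (0 : E) := by
      funext N
      apply Finset.sum_eq_zero
      intro j _
      rw [key j]
      simp
    rw [this]
    exact tendsto_const_nhds
  exact tendsto_nhds_unique (hframe η) h0
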